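/- From a finite derivation tree one can extract a derivation of the same strict length: let T be a finite rooted tree whose nodes are labeled by terms such that each edge from a node labeled t to children labeled t_1,...,t_n, with label l → r, witnesses a rewrite step t → c_n(t_1,...,t_n), where rules are partitioned into strict rules S and weak rules W. Then there exists a relative rewrite sequence t_root (→_{S/W})^k with k equal to the number of S-labeled edges of T, i.e., dh(t_root, →_{S/W}) ≥ |T|_S. -/

import Mathlib

/-- Derivation trees: rooted trees whose nodes are labeled by terms and whose
(hyper)edges are labeled by applied rules. -/
inductive DTr (T R : Type*) : Type _
  | leaf : T → DTr T R
  | node : T → R → List (DTr T R) → DTr T R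

namespace DTr

variable {T R : Type*}

/-- The root label of a derivation tree. -/
def rt : DTr T R → T
  | .leaf t => t
  | .node t _ _ => t

/-- Validity: each edge from a node labeled `t` with rule `ρ` to children labeled
`t₁, …, t_n` witnesses a rewrite step `t →_ρ c_n(t₁,…,t_n)`. -/
inductive valid (step : R → T → T → Prop) (comb : List T → T) : DTr T R → Prop
  | leaf (t : T) : valid step comb (.leaf t)
  | node (t : T) (ρ : R) (ts : List (DTr T R)) :
      step ρ t (comb (ts.map rt)) → (∀ s ∈ ts, valid step comb s) →
      valid step comb (.node t ρ ts)

/-- The number of edges of the tree labeled by a rule in `S`. -/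
def cnt (S : R → Prop) [DecidablePred S] : DTr T R → ℕ
  | .leaf _ => 0
  | .node _ ρ ts => (if S ρ then 1 else 0) + (ts.attach.map (fun s => cnt S s.1)).sum
decreasing_by
  have := List.sizeOf_lt_of_mem s.2
  simp only [DTr.node.sizeOf_spec]
  omega

end DTr

section Aux

variable {T R : Type*} (step : R → T → T → Prop) (S W : R → Prop)

/-- Interleaved derivations: `Der n a b` means there is a derivation from `a` to `b`
consisting of single `W`-steps and `S`-steps, with exactly `n` `S`-steps. -/
inductive Der : ℕ → T → T → Prop
  | refl (a : T) : Der 0 a a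
  | wstep {a b c : T} {n : ℕ} (ρ : R) (hρ : W ρ) (h : step ρ a b) (hd : Der n b c) :
      Der n a c
  | sstep {a b c : T} {n : ℕ} (ρ : R) (hρ : S ρ) (h : step ρ a b) (hd : Der n b c) :
      Der (n + 1) a c

variable {step S W}

lemma Der.trans {m n : ℕ} {a b c : T} (h1 : Der step S W m a b) (h2 : Der step S W n b c) :
    Der step S W (m + n) a c := by
  induction h1 with
  | refl a => simpa using h2
  | wstep ρ hρ h hd ih => exact .wstep ρ hρ h (ih h2)
  | sstep ρ hρ h hd ih =>
      have := Der.sstep ρ hρ h (ih h2)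
      rwa [Nat.add_right_comm]

lemma Der.lift {comb : List T → T}
    (hctx : ∀ (ρ : R) (l₁ l₂ : List T) (s t : T), step ρ s t →
      step ρ (comb (l₁ ++ s :: l₂)) (comb (l₁ ++ t :: l₂)))
    {n : ℕ} {a b : T} (h : Der step S W n a b) (l₁ l₂ : List T) :
    Der step S W n (comb (l₁ ++ a :: l₂)) (comb (l₁ ++ b :: l₂)) := by
  induction h with
  | refl a => exact .refl _
  | wstep ρ hρ h hd ih => exact .wstep ρ hρ (hctx ρ l₁ l₂ _ _ h) ih
  | sstep ρ hρ h hd ih => exact .sstep ρ hρ (hctx ρ l₁ l₂ _ _ h) ih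

lemma list_main [DecidablePred S] {comb : List T → T}
    (hctx : ∀ (ρ : R) (l₁ l₂ : List T) (s t : T), step ρ s t →
      step ρ (comb (l₁ ++ s :: l₂)) (comb (l₁ ++ t :: l₂))) :
    ∀ (ts : List (DTr T R)) (pre : List T),
      (∀ s ∈ ts, ∃ b, Der step S W (DTr.cnt S s) s.rt b) →
      ∃ b, Der step S W ((ts.map (DTr.cnt S)).sum) (comb (pre ++ ts.map DTr.rt)) b := by
  intro ts
  induction ts with
  | nil => exact fun pre _ => ⟨comb (pre ++ []), by simpa using Der.refl _⟩
  | cons s ts ih =>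
      intro pre h
      obtain ⟨b, hb⟩ := h s (by simp)
      have h1 := hb.lift hctx pre (ts.map DTr.rt)
      obtain ⟨b', hb'⟩ := ih (pre ++ [b]) (fun s hs => h s (by simp [hs]))
      rw [List.append_assoc] at hb'
      simp only [List.map_cons, List.sum_cons, List.cons_append] at *
      exact ⟨b', h1.trans hb'⟩

lemma main [DecidablePred S] {comb : List T → T}
    (hall : ∀ ρ : R, S ρ ∨ W ρ)
    (hctx : ∀ (ρ : R) (l₁ l₂ : List T) (s t : T), step ρ s t →
      step ρ (comb (l₁ ++ s :: l₂)) (comb (l₁ ++ t :: l₂))) :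
    ∀ (d : DTr T R), DTr.valid step comb d → ∃ b, Der step S W (DTr.cnt S d) d.rt b
  | .leaf t, _ => ⟨t, by simpa [DTr.cnt, DTr.rt] using Der.refl (step := step) (S := S) (W := W) t⟩
  | .node t ρ ts, hd => by
      have hstep : step ρ t (comb (ts.map DTr.rt)) := by
        cases hd with | node _ _ _ h _ => exact h
      have hvalid : ∀ s ∈ ts, DTr.valid step comb s := by
        cases hd with | node _ _ _ _ h => exact h
      clear hd
      have ihs : ∀ s ∈ ts, ∃ b, Der step S W (DTr.cnt S s) s.rt b := fun s hs =>
          have := List.sizeOf_lt_of_mem hs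
        main hall hctx s (hvalid s hs)
      obtain ⟨b, hb⟩ := list_main hctx ts [] ihs
      rw [List.nil_append] at hb
      have hsum : (ts.attach.map (fun s => DTr.cnt S s.1)).sum = (ts.map (DTr.cnt S)).sum := by
        simp [List.attach_map_val]
      rcases hall ρ with hS | hW
      · refine ⟨b, ?_⟩
        have := Der.sstep (step := step) (S := S) (W := W) ρ hS hstep hb
        simp only [DTr.cnt, DTr.rt, hsum, if_pos hS]
        rwa [Nat.add_comm]
      · refine ⟨b, ?_⟩
        have := Der.wstep (step := step) (S := S) (W := W) ρ hW hstep hb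
        by_cases hS : S ρ
        · simp only [DTr.cnt, DTr.rt, hsum, if_pos hS]
          rw [Nat.add_comm]
          exact Der.sstep ρ hS hstep hb
        · simpa only [DTr.cnt, DTr.rt, hsum, if_neg hS, Nat.zero_add] using this
termination_by d => sizeOf d
decreasing_by
  simp only [DTr.node.sizeOf_spec]
  omega

lemma extract {n : ℕ} {a b : T} (h : Der step S W n a b) :
    ∃ c : ℕ → T, c 0 = a ∧ ∀ i < n,
      ∃ u v : T,
        Relation.ReflTransGen (fun a b => ∃ ρ, W ρ ∧ step ρ a b) (c i) u ∧
        (∃ ρ, S ρ ∧ step ρ u v) ∧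
        Relation.ReflTransGen (fun a b => ∃ ρ, W ρ ∧ step ρ a b) v (c (i + 1)) := by
  induction h with
  | refl a => exact ⟨fun _ => a, rfl, fun i hi => absurd hi (Nat.not_lt_zero i)⟩
  | @wstep a b e n ρ hρ h hd ih =>
      obtain ⟨c, hc0, hc⟩ := ih
      refine ⟨fun i => if i = 0 then a else c i, by simp, fun i hi => ?_⟩
      match i with
      | 0 =>
          obtain ⟨u, v, h1, h2, h3⟩ := hc 0 hi
          rw [hc0] at h1
          exact ⟨u, v, .head ⟨ρ, hρ, h⟩ h1, h2, by simpa using h3⟩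
      | (k+1) =>
          obtain ⟨u, v, h1, h2, h3⟩ := hc (k+1) hi
          exact ⟨u, v, by simpa using h1, h2, by simpa using h3⟩
  | @sstep a b e n ρ hρ h hd ih =>
      obtain ⟨c, hc0, hc⟩ := ih
      refine ⟨fun i => if i = 0 then a else c (i - 1), by simp, fun i hi => ?_⟩
      match i with
      | 0 =>
          refine ⟨a, b, .refl, ⟨ρ, hρ, h⟩, ?_⟩
          simpa [hc0] using Relation.ReflTransGen.refl
      | (k+1) =>
          obtain ⟨u, v, h1, h2, h3⟩ := hc k (by omega)
          exact ⟨u, v, by simpa using h1, h2, by simpa using h3⟩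

end Aux

/-- from a finite derivation tree one can extract a relative rewrite
sequence of the same strict length. If rules are partitioned into strict rules `S` and
weak rules `W`, and rewrite steps are closed under compound contexts, then from the root
of any valid derivation tree `d` there is an `(S/W)`-derivation of length `|d|_S`,
i.e. `dh(root d, →_{S/W}) ≥ |d|_S`. -/
theorem stmt_17 {T R : Type*} (step : R → T → T → Prop) (comb : List T → T)
    (S W : R → Prop) [DecidablePred S]
    (hall : ∀ ρ : R, S ρ ∨ W ρ)
    (hctx : ∀ (ρ : R) (l₁ l₂ : List T) (s t : T), step ρ s t →
      step ρ (comb (l₁ ++ s :: l₂)) (comb (l₁ ++ t :: l₂)))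
    (d : DTr T R) (hd : DTr.valid step comb d) :
    ∃ c : ℕ → T, c 0 = d.rt ∧ ∀ i < d.cnt S,
      ∃ u v : T,
        Relation.ReflTransGen (fun a b => ∃ ρ, W ρ ∧ step ρ a b) (c i) u ∧
        (∃ ρ, S ρ ∧ step ρ u v) ∧
        Relation.ReflTransGen (fun a b => ∃ ρ, W ρ ∧ step ρ a b) v (c (i + 1)) := by
  obtain ⟨b, hb⟩ := main hall hctx d hd
  exact extract hb
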